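/- Let σ be a substitution on a finite alphabet A satisfying condition (C) with partition A₁, …, A_l and integer q, let x be a proper fixed point of σ, and let Ā = A_i for some i with q+1 ≤ i ≤ l (so that the restriction of σ to Ā is a main sub-substitution of σ). Then for every n ∈ ℕ and every letter a ∈ Ā, the word σ^n(a) has infinitely many occurrences in x. -/

import Mathlib

open Filter Topology
open scoped Classical

namespace Cobham

def applyWord {A B : Type*} (σ : A → List B) (w : List A) : List B := w.flatMap σ

def iterWord {A : Type*} (σ : A → List A) (n : ℕ) (w : List A) : List A :=
  (applyWord σ)^[n] w

def lengthIter {A : Type*} (σ : A → List A) (n : ℕ) (a : A) : ℕ :=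
  (iterWord σ n [a]).length

def IsSubstitution {A : Type*} (σ : A → List A) : Prop :=
  ∀ a : A, Tendsto (fun n => lengthIter σ n a) atTop atTop

def IsPrefixOfSeq {A : Type*} (w : List A) (x : ℕ → A) : Prop :=
  ∀ i : Fin w.length, w.get i = x i

def seqTake {A : Type*} (x : ℕ → A) (n : ℕ) : List A := List.ofFn (fun i : Fin n => x i)

def IsFixedPoint {A : Type*} (σ : A → List A) (x : ℕ → A) : Prop :=
  ∀ n : ℕ, IsPrefixOfSeq (applyWord σ (seqTake x n)) x

def IsProperFixedPoint {A : Type*} (σ : A → List A) (x : ℕ → A) : Prop :=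
  IsFixedPoint σ x ∧ ∀ a : A, ∃ i : ℕ, x i = a

def incidenceMatrix {A : Type*} [DecidableEq A] (σ : A → List A) : Matrix A A ℝ :=
  fun i j => ((σ j).count i : ℝ)

def IsPrimitiveMatrix {A : Type*} [Fintype A] [DecidableEq A] (M : Matrix A A ℝ) : Prop :=
  ∃ n : ℕ, 0 < n ∧ ∀ i j, 0 < (M ^ n) i j

def IsDominantEigenvalue {A : Type*} [Fintype A] [DecidableEq A] (M : Matrix A A ℝ) (α : ℝ) : Prop :=
  0 ≤ α ∧ Module.End.HasEigenvalue (Matrix.toLin' M) α ∧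
    ∀ μ : ℂ, Module.End.HasEigenvalue (Matrix.toLin' (M.map Complex.ofReal)) μ → ‖μ‖ ≤ α

def IsPerron (α : ℝ) : Prop :=
  IsIntegral ℤ α ∧ 1 ≤ α ∧
    ∀ μ : ℂ, Polynomial.aeval μ (minpoly ℤ α) = 0 → μ ≠ (α : ℂ) → ‖μ‖ < α

def MultIndep (α β : ℝ) : Prop :=
  ∀ k l : ℕ, 0 < k → 0 < l → α ^ k ≠ β ^ l

def IsUltimatelyPeriodic {C : Type*} (x : ℕ → C) : Prop :=
  ∃ p : ℕ, 0 < p ∧ ∃ N : ℕ, ∀ n : ℕ, N ≤ n → x (n + p) = x n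

def IsPeriodic {C : Type*} (x : ℕ → C) : Prop :=
  ∃ p : ℕ, 0 < p ∧ ∀ n : ℕ, x (n + p) = x n

def OccursAt {C : Type*} (w : List C) (x : ℕ → C) (i : ℕ) : Prop :=
  ∀ j : Fin w.length, w.get j = x (i + j)

def OccursInfinitely {C : Type*} (w : List C) (x : ℕ → C) : Prop :=
  ∀ N : ℕ, ∃ i : ℕ, N ≤ i ∧ OccursAt w x i

def BoundedGaps {C : Type*} (w : List C) (x : ℕ → C) : Prop :=
  ∃ g : ℕ, ∀ N : ℕ, ∃ i : ℕ, N ≤ i ∧ i < N + g ∧ OccursAt w x i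

def InLanguage {C : Type*} (w : List C) (x : ℕ → C) : Prop := ∃ i : ℕ, OccursAt w x i

def IsSubstitutiveSeq {C : Type*} (α : ℝ) (x : ℕ → C) : Prop :=
  ∃ (B : Type) (_ : Fintype B) (_ : DecidableEq B) (σ : B → List B) (y : ℕ → B) (φ : B → C),
    IsSubstitution σ ∧ IsProperFixedPoint σ y ∧
      IsDominantEigenvalue (incidenceMatrix σ) α ∧ x = φ ∘ y

def IsPrimitiveSubstitutiveSeq {C : Type*} (α : ℝ) (x : ℕ → C) : Prop :=
  ∃ (B : Type) (_ : Fintype B) (_ : DecidableEq B) (σ : B → List B) (y : ℕ → B) (φ : B → C),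
    IsSubstitution σ ∧ IsPrimitiveMatrix (incidenceMatrix σ) ∧ IsProperFixedPoint σ y ∧
      IsDominantEigenvalue (incidenceMatrix σ) α ∧ x = φ ∘ y

def HasGrowthTypeWith {A : Type*} (σ : A → List A) (a : A) (d : ℕ) (θ : ℝ) (c : ℝ) : Prop :=
  0 < c ∧ 1 ≤ θ ∧
    Tendsto (fun n : ℕ => (lengthIter σ n a : ℝ) / (c * (n : ℝ) ^ d * θ ^ n)) atTop (𝓝 1)

def HasGrowthType {A : Type*} (σ : A → List A) (a : A) (d : ℕ) (θ : ℝ) : Prop :=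
  ∃ c : ℝ, HasGrowthTypeWith σ a d θ c

noncomputable def lambdaSum {A : Type*} (d : A → ℕ) (θ c : A → ℝ) (Θ : ℝ) (D : ℕ)
    (u : List A) : ℝ :=
  (u.map (fun b => if θ b = Θ ∧ d b = D then c b else 0)).sum

def restrictSub {A : Type*} {l : ℕ} (σ : A → List A) (part : A → Fin l) (i : Fin l) :
    {a : A // part a = i} → List {a : A // part a = i} :=
  fun a => (σ a.1).filterMap (fun b => if h : part b = i then some ⟨b, h⟩ else none)

def subMatrix {A : Type*} (M : Matrix A A ℝ) (P : A → Prop) :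
    Matrix {a : A // P a} {a : A // P a} ℝ := fun a b => M a.1 b.1

def SatisfiesC {A : Type*} [DecidableEq A] (σ : A → List A) (l q : ℕ)
    (part : A → Fin l) : Prop :=
  q < l ∧ Function.Surjective part ∧
  (∀ a b : A, a ∈ σ b → part a = part b ∨
      ((part b : ℕ) < q ∧ (part b : ℕ) < (part a : ℕ))) ∧
  (∀ i : Fin l, (i : ℕ) < q →
      (∀ a b : A, part a = i → part b = i → (σ b).count a = 0) ∨
      (∀ a b : A, part a = i → part b = i → 0 < (σ b).count a)) ∧
  (∀ i : Fin l, q ≤ (i : ℕ) → ∀ a b : A, part a = i → part b = i → 0 < (σ b).count a) ∧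
  (∀ i : Fin l, (i : ℕ) < q →
      ∃ j : Fin l, (i : ℕ) < (j : ℕ) ∧ ∃ a b : A, part a = j ∧ part b = i ∧ a ∈ σ b) ∧
  (∀ i : Fin l, (∃ a b : A, part a = i ∧ part b = i ∧ 0 < (σ b).count a) →
      ∃ (a : A) (u : List A), part a = i ∧
        (σ a).filter (fun b => decide (part b = i)) = a :: u ∧
        (u = [] ↔ ((∀ b : A, part b = i → b = a) ∧ (σ a).count a = 1)))

def IsGoodSubstitution {A : Type*} [Fintype A] [DecidableEq A] (σ : A → List A) (α : ℝ) : Prop :=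
  IsSubstitution σ ∧ IsDominantEigenvalue (incidenceMatrix σ) α ∧
    ∃ (l q : ℕ) (part : A → Fin l), SatisfiesC σ l q part ∧
      ∃ i : Fin l, q ≤ (i : ℕ) ∧
        IsDominantEigenvalue (incidenceMatrix (restrictSub σ part i)) α



section Aux

set_option linter.unusedSectionVars false

variable {A : Type} [DecidableEq A]

lemma applyWord_append (σ : A → List A) (u v : List A) :
    applyWord σ (u ++ v) = applyWord σ u ++ applyWord σ v := by
  simp [applyWord]

lemma iterWord_succ (σ : A → List A) (n : ℕ) (w : List A) :
    iterWord σ (n + 1) w = iterWord σ n (applyWord σ w) :=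
  Function.iterate_succ_apply _ _ _

lemma iterWord_succ' (σ : A → List A) (n : ℕ) (w : List A) :
    iterWord σ (n + 1) w = applyWord σ (iterWord σ n w) :=
  Function.iterate_succ_apply' _ _ _

lemma iterWord_add (σ : A → List A) (m n : ℕ) (w : List A) :
    iterWord σ (m + n) w = iterWord σ m (iterWord σ n w) :=
  Function.iterate_add_apply _ _ _ _

lemma iterWord_append (σ : A → List A) (n : ℕ) (u v : List A) :
    iterWord σ n (u ++ v) = iterWord σ n u ++ iterWord σ n v := by
  induction n generalizing u v with
  | zero => rfl
  | succ n ih =>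
    rw [iterWord_succ, iterWord_succ, iterWord_succ, applyWord_append, ih]

lemma sigma_ne_nil {σ : A → List A} (hσ : IsSubstitution σ) (b : A) : σ b ≠ [] := by
  intro hb
  have hnil : ∀ n : ℕ, iterWord σ (n + 1) [b] = [] := by
    intro n
    induction n with
    | zero => simpa [iterWord, applyWord] using hb
    | succ n ih => rw [iterWord_succ', ih]; rfl
  obtain ⟨N, hN⟩ := ((hσ b).eventually_ge_atTop 1).exists_forall_of_atTop
  have h1 := hN (N + 1) (by omega)
  rw [lengthIter, hnil N] at h1
  simp at h1

lemma length_le_applyWord {σ : A → List A} (hσ : IsSubstitution σ) (w : List A) :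
    w.length ≤ (applyWord σ w).length := by
  induction w with
  | nil => simp [applyWord]
  | cons b w ih =>
    have : applyWord σ (b :: w) = σ b ++ applyWord σ w := rfl
    rw [this, List.length_append, List.length_cons]
    have hb : 1 ≤ (σ b).length := List.length_pos_iff.mpr (sigma_ne_nil hσ b)
    omega

lemma length_le_iterWord {σ : A → List A} (hσ : IsSubstitution σ) (n : ℕ) (w : List A) :
    w.length ≤ (iterWord σ n w).length := by
  induction n generalizing w with
  | zero => simp [iterWord]
  | succ n ih =>
    rw [iterWord_succ]
    exact le_trans (length_le_applyWord hσ w) (ih _)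

lemma prefix_eq_seqTake {w : List A} {x : ℕ → A} (h : IsPrefixOfSeq w x) :
    w = seqTake x w.length := by
  apply List.ext_get
  · simp [seqTake]
  · intro i h1 h2
    have := h ⟨i, h1⟩
    simp only [seqTake, List.get_ofFn]
    simpa using this

lemma seqTake_isPrefix (x : ℕ → A) (n : ℕ) : IsPrefixOfSeq (seqTake x n) x := by
  intro i
  rw [List.get_eq_getElem]; exact List.getElem_ofFn ..

lemma fixed_iter {σ : A → List A} {x : ℕ → A} (hx : IsFixedPoint σ x) (k m : ℕ) :
    IsPrefixOfSeq (iterWord σ k (seqTake x m)) x := by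
  induction k generalizing m with
  | zero => exact seqTake_isPrefix x m
  | succ k ih =>
    rw [iterWord_succ, prefix_eq_seqTake (hx m)]
    exact ih _

lemma occursAt_of_prefix {s v t : List A} {x : ℕ → A}
    (h : IsPrefixOfSeq (s ++ v ++ t) x) : OccursAt v x s.length := by
  intro j
  have hlen : s.length + (j : ℕ) < (s ++ v ++ t).length := by
    simp only [List.length_append]
    have := j.2
    omega
  have hx := h ⟨s.length + (j : ℕ), hlen⟩
  have hv : v.get j = (s ++ v ++ t).get ⟨s.length + (j : ℕ), hlen⟩ := by
    simp only [List.get_eq_getElem]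
    rw [List.getElem_append_left (by simp only [List.length_append]; have := j.2; omega :
          s.length + (j : ℕ) < (s ++ v).length),
        List.getElem_append_right (by omega : s.length ≤ s.length + (j : ℕ))]
    congr 1
    omega
  rw [hv]
  simpa using hx

lemma count_le_applyWord (σ : A → List A) (a : A) (u : List A)
    (h : ∀ b ∈ u, 0 < (σ b).count a) :
    u.length ≤ (applyWord σ u).count a := by
  induction u with
  | nil => simp [applyWord]
  | cons b w ih =>
    have hcons : applyWord σ (b :: w) = σ b ++ applyWord σ w := rfl
    rw [hcons, List.count_append, List.length_cons]
    have h1 := h b (by simp)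
    have h2 := ih (fun c hc => h c (by simp [hc]))
    omega

end Aux

/-- words `σⁿ(a)`, for `a` in a principal primitive component, occur
infinitely often in a proper fixed point. -/
theorem stmt14 {A : Type} [Fintype A] [DecidableEq A] (σ : A → List A)
    (hσ : IsSubstitution σ)
    (l q : ℕ) (part : A → Fin l) (hC : SatisfiesC σ l q part)
    (x : ℕ → A) (hx : IsProperFixedPoint σ x)
    (i : Fin l) (hi : q ≤ (i : ℕ)) :
    ∀ (n : ℕ) (a : A), part a = i → OccursInfinitely (iterWord σ n [a]) x := by
  obtain ⟨hql, hsurj, hC1, hCblock, hCpos, hCgrow, hCfix⟩ := hC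
  intro n a ha N
  -- all letters of σᵏ(a) lie in component i
  have hletters : ∀ k : ℕ, ∀ b ∈ iterWord σ k [a], part b = i := by
    intro k
    induction k with
    | zero =>
      intro b hb
      simp only [iterWord, Function.iterate_zero, id_eq, List.mem_singleton] at hb
      rw [hb]; exact ha
    | succ k ih =>
      intro b hb
      rw [iterWord_succ'] at hb
      rw [applyWord, List.mem_flatMap] at hb
      obtain ⟨c, hc, hbc⟩ := hb
      have hpc := ih c hc
      rcases hC1 b c hbc with h | h
      · rw [h, hpc]
      · exfalso; rw [hpc] at h; omega
  -- many occurrences of the letter a in σᵏ⁺¹(a)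
  have hcount : ∀ k : ℕ, lengthIter σ k a ≤ (iterWord σ (k + 1) [a]).count a := by
    intro k
    rw [iterWord_succ']
    exact count_le_applyWord σ a _ (fun b hb => hCpos i hi a b ha (hletters k b hb))
  obtain ⟨k, hk⟩ := ((hσ a).eventually_ge_atTop (N + 1)).exists
  set u := iterWord σ (k + 1) [a] with hu
  have hcu : N + 1 ≤ u.count a := le_trans hk (hcount k)
  -- find an occurrence of a in u at index j ≥ N
  have hsum : u.count a = (u.take N).count a + (u.drop N).count a := by
    rw [← List.count_append, List.take_append_drop]
  have h1 : (u.take N).count a ≤ N :=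
    le_trans List.count_le_length (List.length_take_le _ _)
  have h2 : 0 < (u.drop N).count a := by omega
  have hmem : a ∈ u.drop N := List.count_pos_iff.mp h2
  obtain ⟨m, hm, hma⟩ := List.mem_iff_getElem.mp hmem
  set j := N + m with hjdef
  have hj : j < u.length := by
    have := List.length_drop (i := N) (l := u)
    omega
  have hja : u[j]'hj = a := by
    rw [← hma, List.getElem_drop]
  have hdecomp : u = u.take j ++ [a] ++ u.drop (j + 1) := by
    conv_lhs => rw [← List.take_append_drop j u]
    rw [List.drop_eq_getElem_cons hj, hja, List.append_assoc]
    rfl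
  -- a occurs in x at position p
  obtain ⟨p, hp⟩ := hx.2 a
  have hseq : seqTake x (p + 1) = seqTake x p ++ [a] := by
    rw [← hp, seqTake, List.ofFn_succ', List.concat_eq_append]
    refine congrArg₂ _ ?_ rfl
    show _ = List.ofFn _
    exact congrArg _ (funext fun i2 => congrArg x (by simp))
  have hpref := fixed_iter hx.1 (n + (k + 1)) (p + 1)
  rw [hseq, iterWord_append] at hpref
  have hiter : iterWord σ (n + (k + 1)) [a] = iterWord σ n u := iterWord_add σ n (k + 1) [a]
  rw [hiter, hdecomp, iterWord_append, iterWord_append] at hpref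
  set P := iterWord σ (n + (k + 1)) (seqTake x p) with hP
  set T := iterWord σ n (u.take j) with hT
  set V := iterWord σ n [a] with hV
  set D := iterWord σ n (u.drop (j + 1)) with hD
  have hpref2 : IsPrefixOfSeq ((P ++ T) ++ V ++ D) x := by
    have heq : (P ++ T) ++ V ++ D = P ++ (T ++ V ++ D) := by
      simp [List.append_assoc]
    rw [heq]
    exact hpref
  refine ⟨(P ++ T).length, ?_, occursAt_of_prefix hpref2⟩
  have hTlen : j ≤ T.length := by
    rw [hT]
    have h3 := length_le_iterWord hσ n (u.take j)
    have h4 : (u.take j).length = j := by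
      rw [List.length_take]
      omega
    omega
  rw [List.length_append]
  omega

end Cobham
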